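/- Let S be a positive definite symmetric 2×2 real matrix, T a positive semidefinite symmetric 2×2 real matrix, and K, n > 0 reals with trace(S⁻¹T) > 2K/n and T₂₂ − m_min·S₂₂ ≠ 0. Define f(β, x) = trace( (S⁻¹(T − (K/n)S − x·a(β)a(β)ᵀ))² ) for β ∈ ℝ and x ∈ [0, ∞). Then f attains its minimum over ℝ × [0, ∞) at the point (β̂_LIML, x̂) where x̂ = (m_max − K/n)/(âᵀS⁻¹â) and â = a(β̂_LIML). -/

import Mathlib

open Matrix

/-- `a(β) = (β, 1)ᵀ`. -/
def aVec (β : ℝ) : Fin 2 → ℝ := ![β, 1]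

/-- quadratic form of adj S at `(β,1)` -/
def Gq (s00 s01 s11 β : ℝ) : ℝ := s11*β^2 - 2*s01*β + s00

def Fq (s00 s01 s11 t00 t01 t11 c β x : ℝ) : ℝ :=
  (s11*(t00-c*s00-x*β^2) - 2*s01*(t01-c*s01-x*β) + s00*(t11-c*s11-x))^2
    - 2*(s00*s11-s01^2)*((t00-c*s00-x*β^2)*(t11-c*s11-x) - (t01-c*s01-x*β)^2)

def Rq (s00 s01 s11 t00 t01 t11 c β : ℝ) : ℝ :=
  (t00-c*s00)*(s11*β-s01)^2 + 2*(t01-c*s01)*((s11*β-s01)*(s00-s01*β)) + (t11-c*s11)*(s00-s01*β)^2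

def CCq (s00 s01 s11 t00 t01 t11 c : ℝ) : ℝ :=
  (s11*(t00-c*s00) - 2*s01*(t01-c*s01) + s00*(t11-c*s11))^2
    - 2*(s00*s11-s01^2)*((t00-c*s00)*(t11-c*s11) - (t01-c*s01)^2)

lemma Fq_eq (s00 s01 s11 t00 t01 t11 c β x : ℝ) :
    Fq s00 s01 s11 t00 t01 t11 c β x
      = CCq s00 s01 s11 t00 t01 t11 c - 2*x*Rq s00 s01 s11 t00 t01 t11 c β
        + x^2*(Gq s00 s01 s11 β)^2 := by
  unfold Fq CCq Rq Gq; ring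

lemma Gq_pos (s00 s01 s11 β : ℝ) (hs11 : 0 < s11) (hd : 0 < s00*s11 - s01^2) :
    0 < Gq s00 s01 s11 β := by
  unfold Gq; nlinarith [sq_nonneg (s11*β - s01)]

lemma rayleigh (A00 A01 A11 w0 w1 : ℝ) (h00 : 0 ≤ A00) (h11 : 0 ≤ A11)
    (hdet : A00*A11 = A01^2) : 0 ≤ A00*w0^2 + 2*A01*(w0*w1) + A11*w1^2 := by
  rcases eq_or_lt_of_le (add_nonneg h00 h11) with h | h
  · have h0 : A00 = 0 := by linarith
    have h1 : A11 = 0 := by linarith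
    have h2 : A01 = 0 := by nlinarith [sq_nonneg A01]
    simp [h0, h1, h2]
  · nlinarith [sq_nonneg (A00*w0 + A01*w1), sq_nonneg (A01*w0 + A11*w1)]

lemma psd_entry (s00 s01 s11 A00 A01 A11 : ℝ) (hs00 : 0 < s00) (hs11 : 0 < s11)
    (hd : 0 < s00*s11 - s01^2) (hdet : A00*A11 = A01^2)
    (htr : 0 < s11*A00 - 2*s01*A01 + s00*A11) : 0 ≤ A11 := by
  by_contra h
  push_neg at h
  have h00 : A00 ≤ 0 := by nlinarith [sq_nonneg A01]
  rcases eq_or_ne A01 0 with h01 | h01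
  · -- A01 = 0 : then A00*A11 = 0, A11 < 0 so A00 = 0, τ = s00*A11 < 0
    have : A00*A11 = 0 := by rw [hdet, h01]; ring
    have hA0 : A00 = 0 := by
      rcases mul_eq_zero.mp this with h' | h'
      · exact h'
      · exact absurd h' h.ne
    rw [hA0, h01] at htr
    nlinarith [mul_neg_of_pos_of_neg hs00 h]
  · have hA01 : 0 < A01^2 := by positivity
    have hL : s11*A00 + s00*A11 ≤ 0 := by
      nlinarith [mul_nonpos_of_nonneg_of_nonpos hs11.le h00, mul_neg_of_pos_of_neg hs00 h]
    have h2 : 0 < -(s11*A00 + s00*A11) - 2*s01*A01 := by linarith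
    nlinarith [sq_nonneg (s11*A00 - s00*A11), mul_pos hd hA01, mul_pos htr h2]

lemma master (s00 s01 s11 t00 t01 t11 m M c β x β' x' : ℝ)
    (hs11 : 0 < s11)
    (hd : 0 < s00*s11 - s01^2)
    (hδ : t11 - m*s11 ≠ 0)
    (P1 : (t00 - m*s00)*(t11 - m*s11) - (t01 - m*s01)^2 = 0)
    (P2 : (t00 - M*s00)*(t11 - M*s11) - (t01 - M*s01)^2 = 0)
    (hsum : s11*t00 - 2*s01*t01 + s00*t11 = (s00*s11 - s01^2)*(m + M))
    (hle : m ≤ M)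
    (hβ' : β' = (t01 - m*s01)/(t11 - m*s11))
    (hx' : x' * Gq s00 s01 s11 β' = (M - c)*(s00*s11 - s01^2))
    (hx : 0 ≤ x) :
    Fq s00 s01 s11 t00 t01 t11 c β' x' ≤ Fq s00 s01 s11 t00 t01 t11 c β x := by
  have hs00 : 0 < s00 := by nlinarith [sq_nonneg s01]
  have hprod : t00*t11 - t01^2 = (s00*s11 - s01^2)*(m*M) := by
    linear_combination P1 + m*hsum
  rcases eq_or_lt_of_le hle with heq | hlt
  · -- degenerate case m = M : contradiction with hδ
    exfalso
    subst heq
    have h2 : s11*(t00 - m*s00) - 2*s01*(t01 - m*s01) + s00*(t11 - m*s11) = 0 := by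
      linear_combination hsum
    have h01 : t01 - m*s01 = 0 := by
      by_contra h01
      have hp : 0 < (t01 - m*s01)^2 := by positivity
      have hq : (s11*(t00 - m*s00) - s00*(t11 - m*s11))^2
          + 4*(s00*s11 - s01^2)*(t01 - m*s01)^2 = 0 := by
        linear_combination (s11*(t00 - m*s00) + s00*(t11 - m*s11) + 2*s01*(t01 - m*s01))*h2
          - 4*s00*s11*P1
      nlinarith [sq_nonneg (s11*(t00 - m*s00) - s00*(t11 - m*s11)), mul_pos hd hp]
    -- now (t00-m*s00)*(t11-m*s11) = 0 and s11*(t00-m*s00) = -s00*(t11-m*s11)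
    have h4 : (t00 - m*s00)*(t11 - m*s11) = 0 := by
      linear_combination P1 + (t01 - m*s01)*h01
    have h5 : s11*(t00 - m*s00) = -(s00*(t11 - m*s11)) := by
      linear_combination h2 + 2*s01*h01
    have h6 : s00*(t11 - m*s11)^2 = 0 := by
      linear_combination (-s11)*h4 + (t11 - m*s11)*h5
    have := mul_eq_zero.mp h6
    rcases this with h' | h'
    · exact hs00.ne' h'
    · exact hδ ((pow_eq_zero_iff (two_ne_zero)).mp h')
  · -- main case m < M
    have hdetA : (M*s00 - t00)*(M*s11 - t11) = (M*s01 - t01)^2 := by linear_combination P2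
    have hτeq : s11*(M*s00 - t00) - 2*s01*(M*s01 - t01) + s00*(M*s11 - t11)
        = (s00*s11 - s01^2)*(M - m) := by linear_combination -hsum
    have hτ : 0 < s11*(M*s00 - t00) - 2*s01*(M*s01 - t01) + s00*(M*s11 - t11) := by
      rw [hτeq]; exact mul_pos hd (by linarith)
    have hA11 : 0 ≤ M*s11 - t11 := psd_entry s00 s01 s11 _ _ _ hs00 hs11 hd hdetA hτ
    have hA00 : 0 ≤ M*s00 - t00 :=
      psd_entry s11 s01 s00 (M*s11 - t11) (M*s01 - t01) (M*s00 - t00) hs11 hs00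
        (by linarith) (by linear_combination hdetA) (by linarith)
    have hQ : ∀ γ : ℝ, 0 ≤ (M - c)*(s00*s11 - s01^2)*Gq s00 s01 s11 γ
        - Rq s00 s01 s11 t00 t01 t11 c γ := by
      intro γ
      have h := rayleigh (M*s00 - t00) (M*s01 - t01) (M*s11 - t11) (s11*γ - s01)
        (s00 - s01*γ) hA00 hA11 hdetA
      have hid : (M - c)*(s00*s11 - s01^2)*Gq s00 s01 s11 γ
          - Rq s00 s01 s11 t00 t01 t11 c γ
          = (M*s00 - t00)*(s11*γ - s01)^2
            + 2*(M*s01 - t01)*((s11*γ - s01)*(s00 - s01*γ))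
            + (M*s11 - t11)*(s00 - s01*γ)^2 := by unfold Gq Rq; ring
      rw [hid]; exact h
    have hE : (M*s00 - t00)*(s11*(t01 - m*s01) - s01*(t11 - m*s11))^2
        + 2*(M*s01 - t01)*((s11*(t01 - m*s01) - s01*(t11 - m*s11))
            *(s00*(t11 - m*s11) - s01*(t01 - m*s01)))
        + (M*s11 - t11)*(s00*(t11 - m*s11) - s01*(t01 - m*s01))^2 = 0 := by
      linear_combination (-((s11*(t01 - m*s01) - s01*(t11 - m*s11))*t01
          + (s00*(t11 - m*s11) - s01*(t01 - m*s01))*t11))*hsum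
        + ((s11*(t01 - m*s01) - s01*(t11 - m*s11))*s01
          + (s00*(t11 - m*s11) - s01*(t01 - m*s01))*s11)*hprod
    have hG' : 0 < Gq s00 s01 s11 β' := Gq_pos _ _ _ _ hs11 hd
    have hQ' : (M - c)*(s00*s11 - s01^2)*Gq s00 s01 s11 β'
        - Rq s00 s01 s11 t00 t01 t11 c β' = 0 := by
      have hscale : ((M - c)*(s00*s11 - s01^2)*Gq s00 s01 s11 β'
            - Rq s00 s01 s11 t00 t01 t11 c β')*(t11 - m*s11)^2
          = (M*s00 - t00)*(s11*(t01 - m*s01) - s01*(t11 - m*s11))^2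
            + 2*(M*s01 - t01)*((s11*(t01 - m*s01) - s01*(t11 - m*s11))
                *(s00*(t11 - m*s11) - s01*(t01 - m*s01)))
            + (M*s11 - t11)*(s00*(t11 - m*s11) - s01*(t01 - m*s01))^2 := by
        have hδ2 : t11 - s11*m ≠ 0 := by rwa [mul_comm s11 m]
        rw [hβ']; unfold Gq Rq; field_simp; ring
      exact (mul_eq_zero.mp (hscale.trans hE)).resolve_right (pow_ne_zero 2 hδ)
    have hR' : Rq s00 s01 s11 t00 t01 t11 c β'
        = (M - c)*(s00*s11 - s01^2)*Gq s00 s01 s11 β' := by linarith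
    have e1 : x'^2*(Gq s00 s01 s11 β')^2 = ((M - c)*(s00*s11 - s01^2))^2 := by
      linear_combination (x'*Gq s00 s01 s11 β' + (M - c)*(s00*s11 - s01^2))*hx'
    have e3 : x'*Rq s00 s01 s11 t00 t01 t11 c β' = ((M - c)*(s00*s11 - s01^2))^2 := by
      linear_combination x'*hR' + (M - c)*(s00*s11 - s01^2)*hx'
    rw [Fq_eq, Fq_eq]
    linarith [e1, e3, sq_nonneg (x*Gq s00 s01 s11 β - (M - c)*(s00*s11 - s01^2)),
      mul_nonneg hx (hQ β)]

set_option maxHeartbeats 2000000 in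
/-- the MD objective with the RE weight matrix attains its minimum
over `ℝ × [0,∞)` at `(β̂_LIML, x̂)` with `x̂ = (m_max − K/n)/(âᵀS⁻¹â)`. -/
theorem stmt_11 (S T : Matrix (Fin 2) (Fin 2) ℝ) (hS : S.PosDef) (hT : T.PosSemidef)
    (K n : ℝ) (hK : 0 < K) (hn : 0 < n)
    (mmin mmax : ℝ)
    (hmin : mmin ∈ spectrum ℝ (S⁻¹ * T)) (hmax : mmax ∈ spectrum ℝ (S⁻¹ * T))
    (hbounds : ∀ μ ∈ spectrum ℝ (S⁻¹ * T), mmin ≤ μ ∧ μ ≤ mmax)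
    (htr : 2 * K / n < (S⁻¹ * T).trace)
    (hdenom : T 1 1 - mmin * S 1 1 ≠ 0) :
    letI f : ℝ → ℝ → ℝ := fun β x =>
      ((S⁻¹ * (T - (K / n) • S - x • vecMulVec (aVec β) (aVec β))) ^ 2).trace
    letI βhat : ℝ := (T 0 1 - mmin * S 0 1) / (T 1 1 - mmin * S 1 1)
    letI xhat : ℝ := (mmax - K / n) / (aVec βhat ⬝ᵥ S⁻¹.mulVec (aVec βhat))
    ∀ (β x : ℝ), 0 ≤ x → f βhat xhat ≤ f β x := by
  intro β x hx
  beta_reduce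
  have hdS : (0:ℝ) < S.det := hS.det_pos
  have hdSne : S.det ≠ 0 := hdS.ne'
  have hS01 : S 1 0 = S 0 1 := by
    have h := congrFun (congrFun (congrArg (fun M => M) hS.1) 0) 1
    simpa [Matrix.conjTranspose_apply] using h
  have hT01 : T 1 0 = T 0 1 := by
    have h := congrFun (congrFun (congrArg (fun M => M) hT.1) 0) 1
    simpa [Matrix.conjTranspose_apply] using h
  have hs11 : 0 < S 1 1 := by
    exact hS.diag_pos
  have hdet2 : S.det = S 0 0 * S 1 1 - S 0 1 ^ 2 := by
    rw [Matrix.det_fin_two, hS01]; ring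
  have hd : 0 < S 0 0 * S 1 1 - S 0 1 ^ 2 := hdet2 ▸ hdS
  have hinv : S⁻¹ = S.det⁻¹ • S.adjugate := by
    rw [Matrix.inv_def, Ring.inverse_eq_inv]
  have hSu : IsUnit S.det := isUnit_iff_ne_zero.2 hdSne
  have hP : ∀ μ : ℝ, μ ∈ spectrum ℝ (S⁻¹ * T) ↔
      (T 0 0 - μ*S 0 0)*(T 1 1 - μ*S 1 1) - (T 0 1 - μ*S 0 1)^2 = 0 := by
    intro μ
    have hSS : S * (algebraMap ℝ (Matrix (Fin 2) (Fin 2) ℝ) μ - S⁻¹ * T) = μ • S - T := by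
      rw [Algebra.algebraMap_eq_smul_one, mul_sub, ← Matrix.mul_assoc,
        Matrix.mul_nonsing_inv S hSu, Matrix.one_mul, mul_smul_comm, mul_one]
    have hdeteq : S.det * (algebraMap ℝ (Matrix (Fin 2) (Fin 2) ℝ) μ - S⁻¹ * T).det
        = (μ • S - T).det := by rw [← Matrix.det_mul, hSS]
    have hneg : (μ • S - T).det = (T - μ • S).det := by
      rw [show μ • S - T = -(T - μ • S) by abel, Matrix.det_neg]
      simp
    have hdexp : (T - μ • S).det
        = (T 0 0 - μ*S 0 0)*(T 1 1 - μ*S 1 1) - (T 0 1 - μ*S 0 1)^2 := by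
      simp only [Matrix.det_fin_two, Matrix.sub_apply, Matrix.smul_apply, smul_eq_mul,
        hS01, hT01]
      ring
    rw [spectrum.mem_iff, Matrix.isUnit_iff_isUnit_det, isUnit_iff_ne_zero, not_ne_iff]
    constructor
    · intro h
      rw [← hdexp, ← hneg, ← hdeteq, h, mul_zero]
    · intro h
      have h2 : S.det * (algebraMap ℝ (Matrix (Fin 2) (Fin 2) ℝ) μ - S⁻¹ * T).det = 0 := by
        rw [hdeteq, hneg, hdexp, h]
      exact (mul_eq_zero.mp h2).resolve_left hdSne
  have P1 := (hP mmin).1 hmin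
  have P2 := (hP mmax).1 hmax
  have hminmax : mmin ≤ mmax := (hbounds mmin hmin).2
  have hι' : S.det⁻¹ * (S 0 0 * S 1 1 - S 0 1^2) = 1 := by
    rw [← hdet2]; exact inv_mul_cancel₀ hdSne
  set b : ℝ := S 1 1 * T 0 0 - 2*S 0 1*T 0 1 + S 0 0*T 1 1 with hb
  have hmu2 : (S.det⁻¹*b - mmin) ∈ spectrum ℝ (S⁻¹ * T) := by
    rw [hP]
    linear_combination P1 + ((S.det⁻¹*b - 2*mmin)*b)*hι'
  have hmu3 : (S.det⁻¹*b - mmax) ∈ spectrum ℝ (S⁻¹ * T) := by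
    rw [hP]
    linear_combination P2 + ((S.det⁻¹*b - 2*mmax)*b)*hι'
  have h2le : S.det⁻¹*b - mmin ≤ mmax := (hbounds _ hmu2).2
  have h3ge : mmin ≤ S.det⁻¹*b - mmax := (hbounds _ hmu3).1
  have h4 : S.det⁻¹*b = mmin + mmax := le_antisymm (by linarith) (by linarith)
  have hsum : b = (S 0 0 * S 1 1 - S 0 1^2)*(mmin + mmax) := by
    rw [← hdet2, ← h4, ← mul_assoc, mul_inv_cancel₀ hdSne, one_mul]
  have ha00 : S.adjugate 0 0 = S 1 1 := by simp [Matrix.adjugate_fin_two]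
  have ha01 : S.adjugate 0 1 = -(S 0 1) := by simp [Matrix.adjugate_fin_two]
  have ha10 : S.adjugate 1 0 = -(S 0 1) := by rw [Matrix.adjugate_fin_two]; simp [hS01]
  have ha11 : S.adjugate 1 1 = S 0 0 := by simp [Matrix.adjugate_fin_two]
  have hf : ∀ γ y : ℝ,
      ((S⁻¹ * (T - (K / n) • S - y • vecMulVec (aVec γ) (aVec γ))) ^ 2).trace
        = (S.det⁻¹)^2 * Fq (S 0 0) (S 0 1) (S 1 1) (T 0 0) (T 0 1) (T 1 1) (K/n) γ y := by
    intro γ y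
    rw [hinv, Matrix.smul_mul, smul_pow, Matrix.trace_smul, smul_eq_mul]
    congr 1
    simp only [pow_two, Matrix.trace_fin_two, Matrix.mul_apply, Fin.sum_univ_two,
      ha00, ha01, ha10, ha11, Matrix.sub_apply, Matrix.smul_apply, smul_eq_mul,
      Matrix.vecMulVec_apply, aVec, Matrix.cons_val_zero,
      Matrix.cons_val_one, Matrix.head_cons, hS01, hT01, Fq]
    ring
  have hβh : ((T 0 1 - mmin * S 0 1) / (T 1 1 - mmin * S 1 1) : ℝ)
      = (T 0 1 - mmin * S 0 1) / (T 1 1 - mmin * S 1 1) := rfl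
  have hdot : aVec ((T 0 1 - mmin * S 0 1) / (T 1 1 - mmin * S 1 1)) ⬝ᵥ
        S⁻¹.mulVec (aVec ((T 0 1 - mmin * S 0 1) / (T 1 1 - mmin * S 1 1)))
      = S.det⁻¹ * Gq (S 0 0) (S 0 1) (S 1 1)
          ((T 0 1 - mmin * S 0 1) / (T 1 1 - mmin * S 1 1)) := by
    rw [hinv]
    simp only [Matrix.mulVec, dotProduct, Fin.sum_univ_two,
      ha00, ha01, ha10, ha11, aVec, Matrix.smul_apply, smul_eq_mul,
      Matrix.cons_val_zero, Matrix.cons_val_one, Matrix.head_cons, hS01, Gq]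
    ring
  have hGpos := Gq_pos (S 0 0) (S 0 1) (S 1 1)
    ((T 0 1 - mmin * S 0 1) / (T 1 1 - mmin * S 1 1)) hs11 hd
  have hxG : ((mmax - K / n) / (aVec ((T 0 1 - mmin * S 0 1) / (T 1 1 - mmin * S 1 1)) ⬝ᵥ
        S⁻¹.mulVec (aVec ((T 0 1 - mmin * S 0 1) / (T 1 1 - mmin * S 1 1)))))
        * Gq (S 0 0) (S 0 1) (S 1 1) ((T 0 1 - mmin * S 0 1) / (T 1 1 - mmin * S 1 1))
      = (mmax - K/n)*(S 0 0 * S 1 1 - S 0 1^2) := by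
    rw [hdot, ← hdet2]
    rw [div_mul_eq_mul_div, mul_comm (S.det)⁻¹ _, ← div_div, mul_div_assoc]
    rw [div_self hGpos.ne', mul_one, div_eq_mul_inv, inv_inv, mul_comm]
  rw [hf β x, hf]
  apply mul_le_mul_of_nonneg_left _ (by positivity)
  exact master (S 0 0) (S 0 1) (S 1 1) (T 0 0) (T 0 1) (T 1 1) mmin mmax (K/n) β x
    ((T 0 1 - mmin * S 0 1) / (T 1 1 - mmin * S 1 1))
    ((mmax - K / n) / (aVec ((T 0 1 - mmin * S 0 1) / (T 1 1 - mmin * S 1 1)) ⬝ᵥ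
        S⁻¹.mulVec (aVec ((T 0 1 - mmin * S 0 1) / (T 1 1 - mmin * S 1 1)))))
    hs11 hd hdenom P1 P2 hsum hminmax rfl hxG hx
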